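/- Let R be a Noetherian ring, I an ideal, M a finitely generated R-module with an I-good filtration (K_n), and let R → R' be a flat ring map. Then the filtration (R' ⊗_R K_n) of R' ⊗_R M is an I·R'-good filtration; in particular, the topology on R' ⊗_R M defined by the submodules R' ⊗_R K_n coincides with the I·R'-adic topology. -/

import Mathlib

open Submodule TensorProduct

lemma baseChange_mono' {R A M : Type*} [CommRing R] [CommRing A] [Algebra R A]
    [AddCommGroup M] [Module R M] {p q : Submodule R M} (h : p ≤ q) :
    p.baseChange A ≤ q.baseChange A := by
  rw [Submodule.baseChange_eq_span, Submodule.baseChange_eq_span]; exact Submodule.span_mono (Submodule.map_mono h)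

lemma baseChange_ideal_smul {R A M : Type*} [CommRing R] [CommRing A] [Algebra R A]
    [AddCommGroup M] [Module R M] (I : Ideal R) (N : Submodule R M) :
    (I • N).baseChange A = I.map (algebraMap R A) • N.baseChange A := by
  apply le_antisymm
  · rw [Submodule.baseChange_eq_span, Submodule.span_le]
    rintro - ⟨x, hx, rfl⟩
    refine Submodule.smul_induction_on hx (fun i hi n hn => ?_) (fun x y hx hy => ?_)
    · have : (TensorProduct.mk R A M 1) (i • n) =
          (algebraMap R A i) • ((1 : A) ⊗ₜ[R] n) := by
        simp [TensorProduct.tmul_smul, algebraMap_smul]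
      rw [this]
      exact Submodule.smul_mem_smul (Ideal.mem_map_of_mem _ hi)
        (Submodule.tmul_mem_baseChange_of_mem 1 hn)
    · simpa [TensorProduct.tmul_add] using Submodule.add_mem _ hx hy
  · refine Submodule.smul_le.mpr fun a ha x hx => ?_
    have key : ∀ i ∈ I, ∀ x ∈ N.baseChange A, algebraMap R A i • x ∈ (I • N).baseChange A := by
      intro i hi x hx
      rw [Submodule.baseChange_eq_span] at hx ⊢
      refine Submodule.span_induction (fun y hy => ?_) (by simp)
        (fun y z _ _ hy hz => by rw [smul_add]; exact Submodule.add_mem _ hy hz)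
        (fun c y _ hy => by rw [smul_comm]; exact Submodule.smul_mem _ c hy) hx
      obtain ⟨n, hn, rfl⟩ := hy
      have : algebraMap R A i • (TensorProduct.mk R A M 1) n = (1 : A) ⊗ₜ[R] (i • n) := by
        simp [TensorProduct.tmul_smul, algebraMap_smul]
      rw [this]
      rw [← Submodule.baseChange_eq_span]
      exact Submodule.tmul_mem_baseChange_of_mem 1 (Submodule.smul_mem_smul hi hn)
    refine Submodule.span_induction (hx := ha) ?_ (by simp) ?_ ?_
    · rintro - ⟨i, hi, rfl⟩
      exact key i hi x hx
    · intro a b _ _ hax hbx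
      rw [add_smul]; exact Submodule.add_mem _ hax hbx
    · intro c a _ hax
      rw [smul_assoc]; exact Submodule.smul_mem _ c hax

lemma baseChange_pow_smul_top {R A M : Type*} [CommRing R] [CommRing A] [Algebra R A]
    [AddCommGroup M] [Module R M] (I : Ideal R) (n : ℕ) :
    (I ^ n • (⊤ : Submodule R M)).baseChange A =
      (I.map (algebraMap R A)) ^ n • (⊤ : Submodule A (A ⊗[R] M)) := by
  rw [baseChange_ideal_smul, Ideal.map_pow, Submodule.baseChange_top]

/-- Flat base change of an `I`-good filtration: if `(K n)` is an `I`-good filtration of a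
finitely generated module `M` over a Noetherian ring `R` and `R → R'` is flat, then the
base-changed filtration `(R' ⊗_R K n)` of `R' ⊗_R M` is `I·R'`-good; in particular the
topology it defines on `R' ⊗_R M` coincides with the `I·R'`-adic topology. -/
theorem stmt_5 (R : Type*) [CommRing R] [IsNoetherianRing R] (I : Ideal R)
    (M : Type*) [AddCommGroup M] [Module R M] [Module.Finite R M]
    (R' : Type*) [CommRing R'] [Algebra R R'] [Module.Flat R R']
    (K : ℕ → Submodule R M)
    (hK0 : K 0 = ⊤)
    (hKdec : ∀ n, K (n + 1) ≤ K n)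
    (hgood : ∀ n, I • K n ≤ K (n + 1))
    (hstable : ∃ N, ∀ n, N ≤ n → I • K n = K (n + 1)) :
    (∀ n, I.map (algebraMap R R') • (K n).baseChange R' ≤ (K (n + 1)).baseChange R') ∧
    (∃ N, ∀ n, N ≤ n →
      I.map (algebraMap R R') • (K n).baseChange R' = (K (n + 1)).baseChange R') ∧
    (∀ n, ∃ m, (K m).baseChange R' ≤
      (I.map (algebraMap R R')) ^ n • (⊤ : Submodule R' (R' ⊗[R] M))) ∧
    (∀ n, ∃ m, (I.map (algebraMap R R')) ^ m • (⊤ : Submodule R' (R' ⊗[R] M)) ≤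
      (K n).baseChange R') := by
  obtain ⟨N, hN⟩ := hstable
  refine ⟨fun n => ?_, ⟨N, fun n hn => ?_⟩, fun n => ?_, fun n => ?_⟩
  · rw [← baseChange_ideal_smul]
    exact baseChange_mono' (hgood n)
  · rw [← baseChange_ideal_smul, hN n hn]
  · have h : ∀ k, K (N + k) ≤ I ^ k • (⊤ : Submodule R M) := by
      intro k
      induction k with
      | zero => simp
      | succ k ih =>
        rw [← Nat.add_assoc, ← hN (N + k) (Nat.le_add_right N k), pow_succ, mul_comm,
          show (I * I ^ k) • (⊤ : Submodule R M) = I • I ^ k • ⊤ from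
            Submodule.smul_assoc I (I ^ k) ⊤]
        exact Submodule.smul_mono le_rfl ih
    exact ⟨N + n, le_trans (baseChange_mono' (h n)) (baseChange_pow_smul_top I n).le⟩
  · have h : ∀ k, I ^ k • (⊤ : Submodule R M) ≤ K k := by
      intro k
      induction k with
      | zero => simp [hK0]
      | succ k ih =>
        rw [pow_succ, mul_comm,
          show (I * I ^ k) • (⊤ : Submodule R M) = I • I ^ k • ⊤ from
            Submodule.smul_assoc I (I ^ k) ⊤]
        exact le_trans (Submodule.smul_mono le_rfl ih) (hgood k)
    exact ⟨n, le_trans (baseChange_pow_smul_top I n).ge (baseChange_mono' (h n))⟩
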